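/- The n-dimensional volume of the descent polytope DP_S equals β(S)/n!, where β(S) is the number of permutations of {1,...,n} with descent set exactly S. -/

import Mathlib

open MeasureTheory Set

/-- The descent polytope `DP_S` in `[0,1]^n`: using 1-indexed positions,
`x_i ≥ x_{i+1}` if `i ∈ S` and `x_i ≤ x_{i+1}` otherwise. -/
def DP (n : ℕ) (S : Set ℕ) : Set (Fin n → ℝ) :=
  {x | (∀ i, 0 ≤ x i ∧ x i ≤ 1) ∧
    ∀ i : ℕ, ∀ h : i + 1 < n,
      ((i + 1) ∈ S → x ⟨i + 1, h⟩ ≤ x ⟨i, Nat.lt_of_succ_lt h⟩) ∧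
      ((i + 1) ∉ S → x ⟨i, Nat.lt_of_succ_lt h⟩ ≤ x ⟨i + 1, h⟩)}

/-- The descent set of a permutation of `{1,…,n}`, in 1-indexed positions:
`j` is a descent iff `1 ≤ j ≤ n-1` and `π_j > π_{j+1}` (1-indexed), i.e.
`π ⟨j-1⟩ > π ⟨j⟩` 0-indexed. -/
def descSetPerm (n : ℕ) (π : Equiv.Perm (Fin n)) : Set ℕ :=
  {j | ∃ h : j < n, 0 < j ∧ π ⟨j, h⟩ < π ⟨j - 1, lt_of_le_of_lt (Nat.sub_le j 1) h⟩}



variable (n : ℕ)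

def cube : Set (Fin n → ℝ) := {x | ∀ i, x i ∈ Set.Icc (0:ℝ) 1}

def simp' (w : Equiv.Perm (Fin n)) : Set (Fin n → ℝ) :=
  {x | ∀ i j : Fin n, i < j → x (w i) < x (w j)}

def cell (w : Equiv.Perm (Fin n)) : Set (Fin n → ℝ) := cube n ∩ simp' n w

lemma cube_eq : cube n = Set.pi Set.univ (fun _ : Fin n => Set.Icc (0:ℝ) 1) := by
  ext x; simp [cube, Set.mem_pi, Pi.le_def, forall_and]

lemma measurableSet_cube : MeasurableSet (cube n) := by
  rw [cube_eq]; exact MeasurableSet.univ_pi (fun _ => measurableSet_Icc)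

lemma volume_cube : volume (cube n) = 1 := by
  rw [cube_eq, volume_pi_pi]
  simp [Real.volume_Icc]

lemma measurableSet_simp' (w : Equiv.Perm (Fin n)) : MeasurableSet (simp' n w) := by
  have : simp' n w = ⋂ i : Fin n, ⋂ j : Fin n, {x : Fin n → ℝ | i < j → x (w i) < x (w j)} := by
    ext x; simp [simp', Set.mem_iInter]
  rw [this]
  refine MeasurableSet.iInter fun i => MeasurableSet.iInter fun j => ?_
  by_cases h : i < j
  · simp only [h, forall_true_left]
    exact measurableSet_lt (measurable_pi_apply _) (measurable_pi_apply _)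
  · have : {x : Fin n → ℝ | i < j → x (w i) < x (w j)} = Set.univ := by ext x; simp [h]
    rw [this]; exact MeasurableSet.univ

lemma measurableSet_cell (w : Equiv.Perm (Fin n)) : MeasurableSet (cell n w) :=
  (measurableSet_cube n).inter (measurableSet_simp' n w)

lemma cell_preimage (w : Equiv.Perm (Fin n)) :
    cell n w = (MeasurableEquiv.piCongrLeft (fun _ : Fin n => ℝ) w.symm) ⁻¹' (cell n 1) := by
  have hT : ∀ x : Fin n → ℝ, (MeasurableEquiv.piCongrLeft (fun _ : Fin n => ℝ) w.symm) x = x ∘ w := by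
    intro x; funext j
    have := MeasurableEquiv.piCongrLeft_apply_apply (w.symm : Fin n ≃ Fin n)
      (β := fun _ : Fin n => ℝ) x (w j)
    simpa using this
  ext x
  simp only [Set.mem_preimage, hT, cell, Set.mem_inter_iff]
  constructor
  · rintro ⟨h1, h2⟩
    exact ⟨fun i => h1 (w i), fun i j hij => h2 i j hij⟩
  · rintro ⟨h1, h2⟩
    refine ⟨fun i => by simpa using h1 (w.symm i), fun i j hij => by simpa using h2 i j hij⟩

lemma volume_cell_eq (w : Equiv.Perm (Fin n)) : volume (cell n w) = volume (cell n 1) := by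
  rw [cell_preimage]
  exact (volume_measurePreserving_piCongrLeft (fun _ : Fin n => ℝ) w.symm).measure_preimage
    (measurableSet_cell n 1).nullMeasurableSet

def badSet : Set (Fin n → ℝ) := {x | ¬ Function.Injective x}

lemma pair_null (a b : Fin n) (hab : a ≠ b) :
    volume {x : Fin n → ℝ | x a = x b} = 0 := by
  set L : (Fin n → ℝ) →ₗ[ℝ] ℝ := (LinearMap.proj (R := ℝ) (φ := fun _ : Fin n => ℝ) a) - (LinearMap.proj b) with hL
  have h1 : {x : Fin n → ℝ | x a = x b} = (LinearMap.ker L : Set (Fin n → ℝ)) := by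
    ext x
    simp [hL, LinearMap.mem_ker, sub_eq_zero]
  have h2 : LinearMap.ker L ≠ ⊤ := by
    intro h
    have : L (Pi.single a 1) = 0 := by
      have : Pi.single a (1:ℝ) ∈ LinearMap.ker L := by rw [h]; trivial
      exact this
    simp [hL, Pi.single_apply, hab, Ne.symm hab] at this
  rw [h1]
  exact MeasureTheory.Measure.addHaar_submodule volume _ h2

lemma volume_badSet : volume (badSet n) = 0 := by
  have hsub : badSet n ⊆ ⋃ a : Fin n, ⋃ b : Fin n,
      {x : Fin n → ℝ | a ≠ b ∧ x a = x b} := by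
    intro x hx
    simp only [badSet, Function.Injective, not_forall, Set.mem_setOf_eq] at hx
    obtain ⟨a, b, hab, hne⟩ := hx
    exact Set.mem_iUnion.2 ⟨a, Set.mem_iUnion.2 ⟨b, hne, hab⟩⟩
  refine measure_mono_null hsub (measure_iUnion_null fun a => measure_iUnion_null fun b => ?_)
  by_cases hab : a = b
  · simp [hab]
  · exact measure_mono_null (fun x hx => hx.2) (pair_null n a b hab)

lemma strictMono_comp_of_mem {w : Equiv.Perm (Fin n)} {x : Fin n → ℝ}
    (hx : x ∈ simp' n w) : StrictMono (x ∘ w) := fun i j hij => hx i j hij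

lemma inj_of_mem {w : Equiv.Perm (Fin n)} {x : Fin n → ℝ}
    (hx : x ∈ simp' n w) : Function.Injective x := by
  have h1 : Function.Injective (x ∘ w) := (strictMono_comp_of_mem n hx).injective
  have : x = (x ∘ w) ∘ w.symm := by funext i; simp
  rw [this]
  exact h1.comp w.symm.injective

lemma simp'_disjoint {w w' : Equiv.Perm (Fin n)} (h : w ≠ w') :
    Disjoint (simp' n w) (simp' n w') := by
  rw [Set.disjoint_left]
  intro x hx hx'
  have h1 := (strictMono_comp_of_mem n hx).monotone
  have h2 := (strictMono_comp_of_mem n hx').monotone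
  have h3 : x ∘ w = x ∘ w' := Tuple.unique_monotone h1 h2
  apply h
  ext i
  exact congrArg Fin.val (inj_of_mem n hx (congrFun h3 i))

lemma cover (x : Fin n → ℝ) (hx : x ∈ cube n) (hinj : Function.Injective x) :
    x ∈ cell n (Tuple.sort x) := by
  refine ⟨hx, fun i j hij => ?_⟩
  have := (Tuple.monotone_sort x).strictMono_of_injective (hinj.comp (Tuple.sort x).injective)
  exact this hij

lemma sum_cells : (Nat.factorial n : ENNReal) * volume (cell n 1) = 1 := by
  classical
  have hdisj : ((Finset.univ : Finset (Equiv.Perm (Fin n))) : Set (Equiv.Perm (Fin n))).Pairwise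
      (Function.onFun Disjoint (fun w => cell n w)) := by
    intro w _ w' _ hww
    exact Disjoint.mono (Set.inter_subset_right) (Set.inter_subset_right)
      (simp'_disjoint n hww)
  have hU : volume (⋃ w ∈ (Finset.univ : Finset (Equiv.Perm (Fin n))), cell n w)
      = ∑ w : Equiv.Perm (Fin n), volume (cell n w) :=
    measure_biUnion_finset hdisj (fun w _ => measurableSet_cell n w)
  have hsum : ∑ w : Equiv.Perm (Fin n), volume (cell n w)
      = (Nat.factorial n : ENNReal) * volume (cell n 1) := by
    rw [Finset.sum_congr rfl (fun w _ => volume_cell_eq n w)]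
    simp [Finset.card_univ, Fintype.card_perm, mul_comm]
  rw [← hsum, ← hU]
  -- show volume of union is 1
  apply le_antisymm
  · calc volume (⋃ w ∈ (Finset.univ : Finset (Equiv.Perm (Fin n))), cell n w)
        ≤ volume (cube n) := measure_mono (by
          intro x hx
          simp only [Set.mem_iUnion] at hx
          obtain ⟨w, _, hw⟩ := hx
          exact hw.1)
      _ = 1 := volume_cube n
  · have hsub : cube n ⊆ (⋃ w ∈ (Finset.univ : Finset (Equiv.Perm (Fin n))), cell n w) ∪ badSet n := by
      intro x hx
      by_cases hinj : Function.Injective x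
      · exact Or.inl (Set.mem_iUnion.2 ⟨Tuple.sort x, Set.mem_iUnion.2 ⟨Finset.mem_univ _, cover n x hx hinj⟩⟩)
      · exact Or.inr hinj
    calc (1 : ENNReal) = volume (cube n) := (volume_cube n).symm
      _ ≤ volume ((⋃ w ∈ (Finset.univ : Finset (Equiv.Perm (Fin n))), cell n w) ∪ badSet n) :=
          measure_mono hsub
      _ ≤ volume (⋃ w ∈ (Finset.univ : Finset (Equiv.Perm (Fin n))), cell n w) + volume (badSet n) :=
          measure_union_le _ _
      _ = volume (⋃ w ∈ (Finset.univ : Finset (Equiv.Perm (Fin n))), cell n w) := by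
          rw [volume_badSet n, add_zero]

lemma volume_cell_one : volume (cell n 1) = (Nat.factorial n : ENNReal)⁻¹ := by
  have h := sum_cells n
  have hne : (Nat.factorial n : ENNReal) ≠ 0 := by
    exact_mod_cast Nat.cast_ne_zero.2 (Nat.factorial_ne_zero n)
  have hnt : (Nat.factorial n : ENNReal) ≠ ⊤ := ENNReal.natCast_ne_top _
  calc volume (cell n 1) = (Nat.factorial n : ENNReal)⁻¹ * ((Nat.factorial n : ENNReal) * volume (cell n 1)) := by
        rw [← mul_assoc, ENNReal.inv_mul_cancel hne hnt, one_mul]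
    _ = (Nat.factorial n : ENNReal)⁻¹ := by rw [h, mul_one]

open Classical in
noncomputable def AS (S : Set ℕ) : Finset (Equiv.Perm (Fin n)) :=
  Finset.univ.filter (fun w => ∀ i : ℕ, ∀ h : i + 1 < n,
    ((i+1) ∈ S ↔ w.symm ⟨i+1, h⟩ < w.symm ⟨i, Nat.lt_of_succ_lt h⟩))

lemma mem_AS_iff (S : Set ℕ) (w : Equiv.Perm (Fin n)) :
    w ∈ AS n S ↔ ∀ i : ℕ, ∀ h : i + 1 < n,
      ((i+1) ∈ S ↔ w.symm ⟨i+1, h⟩ < w.symm ⟨i, Nat.lt_of_succ_lt h⟩) := by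
  classical
  simp [AS]

lemma lt_iff_of_mem {w : Equiv.Perm (Fin n)} {x : Fin n → ℝ}
    (hx : x ∈ simp' n w) (a b : Fin n) : x a < x b ↔ w.symm a < w.symm b := by
  have hs := strictMono_comp_of_mem n hx
  have ha : x a = (x ∘ w) (w.symm a) := by simp
  have hb : x b = (x ∘ w) (w.symm b) := by simp
  rw [ha, hb, hs.lt_iff_lt]

lemma cell_subset_DP (S : Set ℕ) {w : Equiv.Perm (Fin n)} (hw : w ∈ AS n S) :
    cell n w ⊆ DP n S := by
  rintro x ⟨hcube, hsimp⟩
  rw [mem_AS_iff] at hw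
  refine ⟨fun i => hcube i, fun i h => ?_⟩
  set a : Fin n := ⟨i, Nat.lt_of_succ_lt h⟩
  set b : Fin n := ⟨i+1, h⟩
  have hab : a ≠ b := by simp [a, b, Fin.ext_iff]
  constructor
  · intro hiS
    have : w.symm b < w.symm a := (hw i h).1 hiS
    exact le_of_lt ((lt_iff_of_mem n hsimp b a).2 this)
  · intro hiS
    have h1 : ¬ (w.symm b < w.symm a) := fun hc => hiS ((hw i h).2 hc)
    have h2 : w.symm a ≠ w.symm b := fun hc => hab (w.symm.injective hc)
    have : w.symm a < w.symm b := lt_of_le_of_ne (not_lt.1 h1) h2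
    exact le_of_lt ((lt_iff_of_mem n hsimp a b).2 this)

lemma DP_subset (S : Set ℕ) {x : Fin n → ℝ} (hx : x ∈ DP n S)
    (hinj : Function.Injective x) : Tuple.sort x ∈ AS n S ∧ x ∈ cell n (Tuple.sort x) := by
  have hcube : x ∈ cube n := fun i => ⟨(hx.1 i).1, (hx.1 i).2⟩
  have hcell := cover n x hcube hinj
  refine ⟨?_, hcell⟩
  rw [mem_AS_iff]
  intro i h
  set w := Tuple.sort x
  set a : Fin n := ⟨i, Nat.lt_of_succ_lt h⟩
  set b : Fin n := ⟨i+1, h⟩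
  have hab : a ≠ b := by simp [a, b, Fin.ext_iff]
  constructor
  · intro hiS
    have hle : x b ≤ x a := (hx.2 i h).1 hiS
    have hne : x b ≠ x a := fun hc => hab (hinj hc).symm
    exact (lt_iff_of_mem n hcell.2 b a).1 (lt_of_le_of_ne hle hne)
  · intro hlt
    by_contra hiS
    have hle : x a ≤ x b := (hx.2 i h).2 hiS
    exact absurd ((lt_iff_of_mem n hcell.2 b a).2 hlt) (not_lt.2 hle)

lemma volume_DP (S : Set ℕ) :
    volume (DP n S) = ((AS n S).card : ENNReal) * (Nat.factorial n : ENNReal)⁻¹ := by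
  classical
  set U := ⋃ w ∈ AS n S, cell n w with hU
  have hdisj : ((AS n S) : Set (Equiv.Perm (Fin n))).Pairwise
      (Function.onFun Disjoint (fun w => cell n w)) := fun w _ w' _ hww =>
    Disjoint.mono (Set.inter_subset_right) (Set.inter_subset_right) (simp'_disjoint n hww)
  have hvolU : volume U = ((AS n S).card : ENNReal) * (Nat.factorial n : ENNReal)⁻¹ := by
    rw [hU, measure_biUnion_finset hdisj (fun w _ => measurableSet_cell n w),
      Finset.sum_congr rfl (fun w _ => (volume_cell_eq n w).trans (volume_cell_one n)),
      Finset.sum_const, nsmul_eq_mul]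
  rw [← hvolU]
  apply le_antisymm
  · have hsub : DP n S ⊆ U ∪ badSet n := by
      intro x hx
      by_cases hinj : Function.Injective x
      · obtain ⟨hw, hc⟩ := DP_subset n S hx hinj
        exact Or.inl (Set.mem_biUnion hw hc)
      · exact Or.inr hinj
    calc volume (DP n S) ≤ volume (U ∪ badSet n) := measure_mono hsub
      _ ≤ volume U + volume (badSet n) := measure_union_le _ _
      _ = volume U := by rw [volume_badSet n, add_zero]
  · refine measure_mono ?_
    intro x hx
    simp only [hU, Set.mem_iUnion] at hx
    obtain ⟨w, hw, hc⟩ := hx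
    exact cell_subset_DP n S hw hc

lemma descSet_iff (hn : 1 ≤ n) (S : Set ℕ) (hS : S ⊆ Set.Icc 1 (n - 1))
    (π : Equiv.Perm (Fin n)) :
    descSetPerm n π = S ↔ ∀ i : ℕ, ∀ h : i + 1 < n,
      ((i+1) ∈ S ↔ π ⟨i+1, h⟩ < π ⟨i, Nat.lt_of_succ_lt h⟩) := by
  constructor
  · intro hset i h
    rw [← hset]
    constructor
    · rintro ⟨h', _, hlt⟩
      convert hlt using 2; simp
    · intro hlt
      exact ⟨h, Nat.succ_pos i, by convert hlt using 2; simp⟩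
  · intro hcond
    ext j
    constructor
    · rintro ⟨hj, hj0, hlt⟩
      obtain ⟨i, rfl⟩ : ∃ i, j = i + 1 := ⟨j - 1, (Nat.succ_pred_eq_of_pos hj0).symm⟩
      exact (hcond i hj).2 (by convert hlt using 2; simp)
    · intro hjS
      obtain ⟨hj1, hj2⟩ := hS hjS
      have hjn : j < n := lt_of_le_of_lt hj2 (Nat.sub_lt hn one_pos)
      obtain ⟨i, rfl⟩ : ∃ i, j = i + 1 := ⟨j - 1, (Nat.succ_pred_eq_of_pos hj1).symm⟩
      exact ⟨hjn, Nat.succ_pos i, by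
        have := (hcond i hjn).1 hjS
        convert this using 2; simp⟩

lemma card_AS (hn : 1 ≤ n) (S : Set ℕ) (hS : S ⊆ Set.Icc 1 (n - 1)) :
    Nat.card {π : Equiv.Perm (Fin n) // descSetPerm n π = S} = (AS n S).card := by
  classical
  have e : {π : Equiv.Perm (Fin n) // descSetPerm n π = S} ≃ {w // w ∈ AS n S} := by
    refine ⟨fun p => ⟨p.1.symm, ?_⟩, fun p => ⟨p.1.symm, ?_⟩, fun p => by simp, fun p => by simp⟩
    · rw [mem_AS_iff]
      simp only [Equiv.symm_symm]
      exact (descSet_iff n hn S hS p.1).1 p.2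
    · rw [descSet_iff n hn S hS]
      have := (mem_AS_iff n S p.1).1 p.2
      simpa using this
  rw [Nat.card_congr e]
  exact Nat.card_eq_finsetCard (AS n S)

/-- the volume of `DP_S` is `β(S)/n!`. -/
theorem stmt3 (n : ℕ) (hn : 1 ≤ n) (S : Set ℕ) (hS : S ⊆ Set.Icc 1 (n - 1)) :
    MeasureTheory.volume (DP n S) =
      (Nat.card {π : Equiv.Perm (Fin n) // descSetPerm n π = S} : ENNReal) /
        (Nat.factorial n : ENNReal) := by
  rw [volume_DP n S, card_AS n hn S hS, div_eq_mul_inv]
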